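/- For the recursively power-transformed forward variables α_t(j; q) of an HMM, defined by α_1(j; q) := π_j f_j(x_1) and α_{t+1}(j; q) := [∑_{i∈S} (α_t(i; q) p_{ij})^q]^{1/q} · f_j(x_{t+1}), the limit as q → ∞ exists and equals α_t(j; ∞) = max{ p(x^t, s^t) : s^t ∈ S^t, s_t = j } for every t = 1,...,T and j ∈ S. -/

import Mathlib

open Filter Finset Real

/-- `(∑ i, g q i ^ q) ^ (1/q) → max_i a_i` when each `g q i → a i` with nonneg values. -/
lemma aux_sum_rpow_tendsto {ι : Type*} [Fintype ι] [Nonempty ι]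
    (g : ℝ → ι → ℝ) (a : ι → ℝ)
    (hg : ∀ i, Tendsto (fun q => g q i) atTop (nhds (a i)))
    (hpos : ∀ q, 1 ≤ q → ∀ i, 0 ≤ g q i) :
    Tendsto (fun q => (∑ i, (g q i) ^ q) ^ (1/q)) atTop
      (nhds (Finset.univ.sup' Finset.univ_nonempty a)) := by
  set m : ℝ → ℝ := fun q => Finset.univ.sup' Finset.univ_nonempty (g q) with hm_def
  have hm : Tendsto m atTop (nhds (Finset.univ.sup' Finset.univ_nonempty a)) :=
    Filter.Tendsto.finset_sup'_nhds_apply _ (fun i _ => hg i)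
  have hcard : (0:ℝ) < (Fintype.card ι : ℝ) := by
    exact_mod_cast Fintype.card_pos
  have hcexp : Tendsto (fun q : ℝ => ((Fintype.card ι : ℝ)) ^ (1/q)) atTop (nhds 1) := by
    have h0 : Tendsto (fun q : ℝ => 1/q) atTop (nhds 0) := by
      simpa [one_div] using tendsto_inv_atTop_zero
    have := (Real.continuousAt_const_rpow (a := (Fintype.card ι : ℝ)) (b := 0)
      (ne_of_gt hcard)).tendsto.comp h0
    simpa [Real.rpow_zero, Function.comp_def] using this
  have hupperlim : Tendsto (fun q : ℝ => ((Fintype.card ι : ℝ)) ^ (1/q) * m q) atTop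
      (nhds (Finset.univ.sup' Finset.univ_nonempty a)) := by
    simpa using hcexp.mul hm
  refine tendsto_of_tendsto_of_tendsto_of_le_of_le' hm hupperlim ?_ ?_
  · filter_upwards [eventually_ge_atTop (1:ℝ)] with q hq
    have hq0 : 0 < q := lt_of_lt_of_le one_pos hq
    obtain ⟨i₀, _, hi₀⟩ := Finset.exists_mem_eq_sup' Finset.univ_nonempty (g q)
    have hi₀' : m q = g q i₀ := hi₀
    have hmq0 : 0 ≤ m q := hi₀' ▸ hpos q hq i₀
    have hsum : m q ^ q ≤ ∑ i, (g q i) ^ q := by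
      rw [hi₀']
      exact Finset.single_le_sum (fun i _ => Real.rpow_nonneg (hpos q hq i) q)
        (Finset.mem_univ i₀)
    calc m q = (m q ^ q) ^ (1/q) := by
            rw [← Real.rpow_mul hmq0, mul_one_div_cancel (ne_of_gt hq0), Real.rpow_one]
      _ ≤ (∑ i, (g q i) ^ q) ^ (1/q) :=
          Real.rpow_le_rpow (Real.rpow_nonneg hmq0 q) hsum (by positivity)
  · filter_upwards [eventually_ge_atTop (1:ℝ)] with q hq
    have hq0 : 0 < q := lt_of_lt_of_le one_pos hq
    have hmq0 : 0 ≤ m q := le_trans (hpos q hq (Classical.arbitrary ι))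
      (Finset.le_sup' (g q) (Finset.mem_univ _))
    have hsum : ∑ i, (g q i) ^ q ≤ (Fintype.card ι : ℝ) * m q ^ q := by
      calc ∑ i, (g q i) ^ q ≤ ∑ _i : ι, m q ^ q :=
            Finset.sum_le_sum (fun i _ => Real.rpow_le_rpow (hpos q hq i)
              (Finset.le_sup' (g q) (Finset.mem_univ i)) (le_of_lt hq0))
        _ = (Fintype.card ι : ℝ) * m q ^ q := by
            rw [Finset.sum_const, Finset.card_univ, nsmul_eq_mul]
    calc (∑ i, (g q i) ^ q) ^ (1/q) ≤ ((Fintype.card ι : ℝ) * m q ^ q) ^ (1/q) :=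
          Real.rpow_le_rpow (Finset.sum_nonneg fun i _ =>
            Real.rpow_nonneg (hpos q hq i) q) hsum (by positivity)
      _ = (Fintype.card ι : ℝ) ^ (1/q) * m q := by
          rw [Real.mul_rpow (le_of_lt hcard) (Real.rpow_nonneg hmq0 q),
            ← Real.rpow_mul hmq0, mul_one_div_cancel (ne_of_gt hq0), Real.rpow_one]

/-- For the recursively power-transformed forward variables
`α_t(j; q)` of an HMM (`α_1(j; q) = π_j f_j(x_1)`,
`α_{t+1}(j; q) = [∑_i (α_t(i; q) p_{ij})^q]^{1/q} · f_j(x_{t+1})`), the limit as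
`q → ∞` exists and equals `max{p(x^t, s^t) : s^t ∈ S^t, s_t = j}` for every
`1 ≤ t ≤ T` and `j ∈ S`. -/
theorem stmt15 {S : Type*} [Fintype S] [Nonempty S] (T : ℕ) (hT : 1 ≤ T)
    -- fixed data `f t j = f_j(x_t)` (times 1,…,T)
    (pi : S → ℝ) (A : S → S → ℝ) (f : ℕ → S → ℝ)
    (hpi : ∀ s, 0 ≤ pi s) (hA : ∀ i j, 0 ≤ A i j) (hf : ∀ t s, 0 ≤ f t s)
    -- the transformed forward variables `α q t j = α_t(j; q)`
    (α : ℝ → ℕ → S → ℝ)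
    (hα1 : ∀ (q : ℝ) (j : S), α q 1 j = pi j * f 1 j)
    (hαrec : ∀ q : ℝ, 1 ≤ q → ∀ t, 1 ≤ t → t < T → ∀ j,
      α q (t + 1) j = (∑ i, (α q t i * A i j) ^ q) ^ (1 / q) * f (t + 1) j)
    -- `jointUpTo t s = p(x^t, s^t)` for a path `s` (indexed by times 1,…,t)
    (jointUpTo : ℕ → (ℕ → S) → ℝ)
    (hjointUpTo : ∀ t (s : ℕ → S), jointUpTo t s =
      pi (s 1) * f 1 (s 1) * ∏ u ∈ Finset.Icc 2 t, (A (s (u - 1)) (s u) * f u (s u))) :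
    ∀ t, 1 ≤ t → t ≤ T → ∀ j,
      Filter.Tendsto (fun q : ℝ => α q t j) Filter.atTop
        (nhds (sSup {r : ℝ | ∃ s : ℕ → S, s t = j ∧ r = jointUpTo t s})) := by
  -- the sets of path-probabilities
  set P : ℕ → S → Set ℝ := fun t j => {r : ℝ | ∃ s : ℕ → S, s t = j ∧ r = jointUpTo t s}
    with hP_def
  -- jointUpTo only depends on values at times 1..t
  have hcongr : ∀ t, 1 ≤ t → ∀ (s s' : ℕ → S), (∀ u, 1 ≤ u → u ≤ t → s u = s' u) →
      jointUpTo t s = jointUpTo t s' := by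
    intro t ht s s' h
    rw [hjointUpTo, hjointUpTo]
    rw [h 1 le_rfl ht]
    congr 1
    apply Finset.prod_congr rfl
    intro u hu
    rw [Finset.mem_Icc] at hu
    rw [h (u-1) (by omega) (by omega), h u (by omega) (by omega)]
  -- finiteness of P t j
  have hfin : ∀ t, 1 ≤ t → ∀ j, (P t j).Finite := by
    intro t ht j
    have : P t j ⊆ Set.range (fun v : (Finset.Icc 1 t → S) =>
        jointUpTo t (fun u => if h : u ∈ Finset.Icc 1 t then v ⟨u, h⟩
          else Classical.arbitrary S)) := by
      rintro r ⟨s, hs, rfl⟩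
      refine ⟨fun u => s u.1, ?_⟩
      apply hcongr t ht
      intro u h1 h2
      rw [dif_pos (Finset.mem_Icc.mpr ⟨h1, h2⟩)]
    exact Set.Finite.subset (Set.finite_range _) this
  have hne : ∀ t j, (P t j).Nonempty := by
    intro t j
    exact ⟨jointUpTo t (fun _ => j), fun _ => j, rfl, rfl⟩
  have hbdd : ∀ t, 1 ≤ t → ∀ j, BddAbove (P t j) := fun t ht j => (hfin t ht j).bddAbove
  have hmemP : ∀ t, 1 ≤ t → ∀ j, sSup (P t j) ∈ P t j := fun t ht j =>
    Set.Nonempty.csSup_mem (hne t j) (hfin t ht j)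
  have hnonnegP : ∀ t j, ∀ r ∈ P t j, 0 ≤ r := by
    rintro t j r ⟨s, _, rfl⟩
    rw [hjointUpTo]
    have : 0 ≤ ∏ u ∈ Finset.Icc 2 t, (A (s (u-1)) (s u) * f u (s u)) :=
      Finset.prod_nonneg fun u _ => mul_nonneg (hA _ _) (hf _ _)
    exact mul_nonneg (mul_nonneg (hpi _) (hf _ _)) this
  -- base value
  have hbase : ∀ j, sSup (P 1 j) = pi j * f 1 j := by
    intro j
    have : P 1 j = {pi j * f 1 j} := by
      ext r
      constructor
      · rintro ⟨s, hs, rfl⟩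
        rw [hjointUpTo]
        simp [hs, show Finset.Icc 2 1 = ∅ from Finset.Icc_eq_empty (by omega)]
      · rintro rfl
        refine ⟨fun _ => j, rfl, ?_⟩
        rw [hjointUpTo]
        simp [show Finset.Icc 2 1 = ∅ from Finset.Icc_eq_empty (by omega)]
    rw [this, csSup_singleton]
  -- one-step expansion of jointUpTo
  have hstep : ∀ t (s : ℕ → S), 1 ≤ t → jointUpTo (t+1) s =
      jointUpTo t s * (A (s t) (s (t+1)) * f (t+1) (s (t+1))) := by
    intro t s ht
    rw [hjointUpTo, hjointUpTo, Finset.prod_Icc_succ_top (by omega)]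
    simp only [Nat.add_sub_cancel]
    ring
  -- recursion for the sups
  have hsupstep : ∀ t, 1 ≤ t → ∀ j, sSup (P (t+1) j) =
      (Finset.univ.sup' Finset.univ_nonempty (fun i => sSup (P t i) * A i j)) * f (t+1) j := by
    intro t ht j
    apply le_antisymm
    · -- sSup (P (t+1) j) ≤ max
      obtain ⟨s, hs, hv⟩ := hmemP (t+1) (by omega) j
      rw [hv, hstep t s ht, hs]
      have h1 : jointUpTo t s ≤ sSup (P t (s t)) :=
        le_csSup (hbdd t ht (s t)) ⟨s, rfl, rfl⟩
      have h2 : jointUpTo t s * A (s t) j ≤ sSup (P t (s t)) * A (s t) j :=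
        mul_le_mul_of_nonneg_right h1 (hA _ _)
      have h3 : sSup (P t (s t)) * A (s t) j ≤
          Finset.univ.sup' Finset.univ_nonempty (fun i => sSup (P t i) * A i j) :=
        Finset.le_sup' (fun i => sSup (P t i) * A i j) (Finset.mem_univ (s t))
      calc jointUpTo t s * (A (s t) j * f (t+1) j)
          = jointUpTo t s * A (s t) j * f (t+1) j := by ring
        _ ≤ Finset.univ.sup' Finset.univ_nonempty (fun i => sSup (P t i) * A i j)
            * f (t+1) j := mul_le_mul_of_nonneg_right (le_trans h2 h3) (hf _ _)
    · -- max ≤ sSup (P (t+1) j)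
      obtain ⟨i₀, _, hi₀⟩ := Finset.exists_mem_eq_sup' Finset.univ_nonempty
        (fun i => sSup (P t i) * A i j)
      rw [hi₀]
      obtain ⟨s, hs, hv⟩ := hmemP t ht i₀
      set s' : ℕ → S := fun u => if u = t + 1 then j else s u with hs'_def
      have hs'j : s' (t+1) = j := by simp [hs'_def]
      have hagree : jointUpTo t s' = jointUpTo t s := by
        apply hcongr t ht
        intro u h1 h2
        simp [hs'_def, show u ≠ t + 1 by omega]
      have hs't : s' t = s t := by simp [hs'_def]
      have : jointUpTo (t+1) s' = sSup (P t i₀) * A i₀ j * f (t+1) j := by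
        rw [hstep t s' ht, hagree, hs'j, hs't, hs, ← hv]
        ring
      rw [← this]
      exact le_csSup (hbdd (t+1) (by omega) j) ⟨s', hs'j, rfl⟩
  -- nonnegativity of α
  have hαpos : ∀ q : ℝ, 1 ≤ q → ∀ t, 1 ≤ t → t ≤ T → ∀ j, 0 ≤ α q t j := by
    intro q hq t ht
    induction t, ht using Nat.le_induction with
    | base => intro _ j; rw [hα1]; exact mul_nonneg (hpi j) (hf 1 j)
    | succ t ht ih =>
      intro htT j
      rw [hαrec q hq t ht (by omega)]
      have h1 : 0 ≤ (∑ i, (α q t i * A i j) ^ q) ^ (1/q) := by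
        apply Real.rpow_nonneg
        exact Finset.sum_nonneg fun i _ => Real.rpow_nonneg
          (mul_nonneg (ih (by omega) i) (hA i j)) q
      exact mul_nonneg h1 (hf _ _)
  -- main induction
  intro t ht
  induction t, ht using Nat.le_induction with
  | base =>
    intro _ j
    rw [show {r : ℝ | ∃ s : ℕ → S, s 1 = j ∧ r = jointUpTo 1 s} = P 1 j from rfl, hbase j]
    apply Tendsto.congr' (by filter_upwards with q using (hα1 q j).symm)
    exact tendsto_const_nhds
  | succ t ht ih =>
    intro htT j
    have htT' : t < T := by omega
    rw [show {r : ℝ | ∃ s : ℕ → S, s (t+1) = j ∧ r = jointUpTo (t+1) s} = P (t+1) j from rfl,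
      hsupstep t ht j]
    have hlim := (aux_sum_rpow_tendsto (fun q i => α q t i * A i j)
      (fun i => sSup (P t i) * A i j)
      (fun i => (ih (by omega) i).mul_const (A i j))
      (fun q hq i => mul_nonneg (hαpos q hq t ht (by omega) i) (hA i j))).mul_const
      (f (t+1) j)
    apply Tendsto.congr' ?_ hlim
    filter_upwards [eventually_ge_atTop (1:ℝ)] with q hq
    exact (hαrec q hq t ht htT' j).symm
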